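/- Let E be an elliptic curve over a field K of characteristic 0 with E(K)[2] ≅ Z/2Z, generated by a point P, and let φ: E → E' be the 2-isogeny with kernel C = ⟨P⟩. Then E admits a cyclic subgroup of order 4 stable under Gal(K̄/K) if and only if all points of E'[2] are K-rational, i.e. K(E'[2]) = K. -/

import Mathlib

open Polynomial WeierstrassCurve WeierstrassCurve.Affine

section Helpers
variable {F : Type*} [Field F] [DecidableEq F] {W : Affine F}
  (ha1 : W.a₁ = 0) (ha3 : W.a₃ = 0) (ha6 : W.a₆ = 0)

include ha1 ha3 ha6 in
lemma my_equation_iff (x y : F) :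
    W.Equation x y ↔ y ^ 2 = x ^ 3 + W.a₂ * x ^ 2 + W.a₄ * x := by
  rw [equation_iff, ha1, ha3, ha6]
  constructor <;> intro h <;> linear_combination h

include ha1 ha3 in
lemma my_negY (x y : F) : W.negY x y = -y := by rw [negY, ha1, ha3]; ring

lemma y_eq_zero_of_self_neg {F : Type*} [Field F] [CharZero F] {y : F} (he : y = -y) : y = 0 := by
  have h2 : (2 : F) * y = 0 := by linear_combination he
  rcases mul_eq_zero.mp h2 with h | h
  · exact absurd h two_ne_zero
  · exact h

include ha1 ha3 in
lemma my_Y_ne [CharZero F] {x y : F} (hy : y ≠ 0) : y ≠ W.negY x y := by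
  rw [my_negY ha1 ha3]
  exact fun he => hy (y_eq_zero_of_self_neg he)

include ha1 ha3 in
lemma my_two_torsion [CharZero F] {x y : F} (h : W.Nonsingular x y) :
    Point.some _ _ h + Point.some _ _ h = 0 ↔ y = 0 := by
  constructor
  · intro hadd
    by_contra hy
    rw [Point.add_self_of_Y_ne (my_Y_ne ha1 ha3 hy)] at hadd
    exact Point.some_ne_zero _ hadd
  · intro hy
    exact Point.add_self_of_Y_eq (by rw [my_negY ha1 ha3, hy, neg_zero])

include ha1 ha3 ha6 in
lemma my_x_sq [CharZero F] {x y : F} (h : W.Nonsingular x y) (hy : y ≠ 0)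
    (hadd : W.addX x x (W.slope x x y y) = 0) : x ^ 2 = W.a₄ := by
  have heq : y ^ 2 = x ^ 3 + W.a₂ * x ^ 2 + W.a₄ * x :=
    (my_equation_iff ha1 ha3 ha6 x y).mp h.left
  have hyy : y + y ≠ 0 := fun hc => hy (y_eq_zero_of_self_neg (by linear_combination hc))
  rw [slope_of_Y_ne rfl (my_Y_ne ha1 ha3 hy)] at hadd
  rw [addX, ha1, my_negY ha1 ha3] at hadd
  rw [sub_neg_eq_add] at hadd
  field_simp [hyy] at hadd
  have key : (x ^ 2 - W.a₄) ^ 2 = 0 := by linear_combination hadd + 4 * (W.a₂ + 2*x) * heq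
  exact sub_eq_zero.mp (pow_eq_zero_iff (two_ne_zero) |>.mp key)

lemma some_congr {x₁ y₁ x₂ y₂ : F} (h₁ : W.Nonsingular x₁ y₁) (h₂ : W.Nonsingular x₂ y₂)
    (hx : x₁ = x₂) (hy : y₁ = y₂) : Point.some _ _ h₁ = Point.some _ _ h₂ := by
  subst hx; subst hy; rfl

lemma some_inj {x₁ y₁ x₂ y₂ : F} {h₁ : W.Nonsingular x₁ y₁} {h₂ : W.Nonsingular x₂ y₂}
    (h : Point.some _ _ h₁ = Point.some _ _ h₂) : x₁ = x₂ ∧ y₁ = y₂ := by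
  cases h; exact ⟨rfl, rfl⟩

include ha1 ha3 ha6 in
lemma my_double [CharZero F] {x y : F} (h : W.Nonsingular x y) (hy : y ≠ 0)
    (hx2 : x ^ 2 = W.a₄) (h00 : W.Nonsingular 0 0) :
    Point.some _ _ h + Point.some _ _ h = Point.some _ _ h00 := by
  have heq : y ^ 2 = x ^ 3 + W.a₂ * x ^ 2 + W.a₄ * x :=
    (my_equation_iff ha1 ha3 ha6 x y).mp h.left
  have hyy : y + y ≠ 0 := fun hc => hy (y_eq_zero_of_self_neg (by linear_combination hc))
  rw [Point.add_self_of_Y_ne (my_Y_ne ha1 ha3 hy)]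
  set l := W.slope x x y y with hl
  have hsl : l * (y + y) = 3 * x ^ 2 + 2 * W.a₂ * x + W.a₄ := by
    rw [hl, slope_of_Y_ne rfl (my_Y_ne ha1 ha3 hy), ha1, my_negY ha1 ha3, sub_neg_eq_add]
    field_simp; ring
  have hN : (3 * x ^ 2 + 2 * W.a₂ * x + W.a₄) ^ 2 = (W.a₂ + 2 * x) * (y + y) ^ 2 := by
    linear_combination (-4) * (W.a₂ + 2 * x) * heq + (x ^ 2 - W.a₄) * hx2
  have hl2 : l ^ 2 = W.a₂ + 2 * x := by
    have h1 : (l ^ 2 - (W.a₂ + 2 * x)) * (y + y) ^ 2 = 0 := by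
      linear_combination (l * (y+y) + (3 * x ^ 2 + 2 * W.a₂ * x + W.a₄)) * hsl + hN
    rcases mul_eq_zero.mp h1 with h1 | h1
    · linear_combination h1
    · exact absurd (pow_eq_zero_iff two_ne_zero |>.mp h1) hyy
  have hlx : l * x = y := by
    have h1 : (l * x - y) * (y + y) = 0 := by
      linear_combination x * hsl - 2 * heq + x * hx2
    rcases mul_eq_zero.mp h1 with h1 | h1
    · linear_combination h1
    · exact absurd h1 hyy
  have hx3 : W.addX x x l = 0 := by
    rw [addX, ha1]
    linear_combination hl2
  have hy3 : W.addY x x y l = 0 := by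
    rw [addY, my_negY ha1 ha3, negAddY, hx3]
    linear_combination hlx
  exact some_congr _ _ hx3 hy3

end Helpers

lemma fixed_mem {K : Type*} [Field K] [CharZero K] (x : AlgebraicClosure K)
    (h : ∀ σ : AlgebraicClosure K ≃ₐ[K] AlgebraicClosure K, σ x = x) :
    ∃ β : K, algebraMap K (AlgebraicClosure K) β = x := by
  have hint : IsIntegral K x := Algebra.IsIntegral.isIntegral x
  by_contra hc
  push_neg at hc
  have hnotmem : x ∉ (algebraMap K (AlgebraicClosure K)).range := by
    rintro ⟨β, hβ⟩; exact hc β hβ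
  have hdeg : 2 ≤ (minpoly K x).natDegree := (minpoly.two_le_natDegree_iff hint).mpr hnotmem
  have hsep : (minpoly K x).Separable := (minpoly.irreducible hint).separable
  have hsplit : Splits ((minpoly K x).map (algebraMap K (AlgebraicClosure K))) :=
    IsAlgClosed.splits _
  have hcard : Fintype.card ((minpoly K x).rootSet (AlgebraicClosure K)) =
      (minpoly K x).natDegree := card_rootSet_eq_natDegree hsep hsplit
  have hxmem : x ∈ (minpoly K x).rootSet (AlgebraicClosure K) := by
    rw [mem_rootSet]
    exact ⟨minpoly.ne_zero hint, minpoly.aeval K x⟩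
  have hcard' : 1 < Fintype.card ((minpoly K x).rootSet (AlgebraicClosure K)) := by
    rw [hcard]; omega
  obtain ⟨⟨y, hy⟩, hne⟩ := Fintype.exists_ne_of_one_lt_card hcard' (⟨x, hxmem⟩ :
    (minpoly K x).rootSet (AlgebraicClosure K))
  rw [mem_rootSet] at hy
  obtain ⟨σ, hσ⟩ := minpoly.exists_algEquiv_of_root' (Algebra.IsAlgebraic.isAlgebraic x) hy.2
  exact hne (Subtype.ext (show y = x by rw [← hσ]; exact h σ))

open Classical in
/-- Let `E` be an elliptic curve over a field `K` of characteristic 0 with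
`E(K)[2] ≅ ℤ/2ℤ`, generated by the point `P = (0,0)` on a model `E : y² = x³ + Ax² + Bx`, and
let `φ : E → E'` be the 2-isogeny with kernel `C = ⟨P⟩`, where
`E' : y² = x³ - 2Ax² + (A² - 4B)x`.  Then `E` admits a cyclic subgroup of order 4 stable under
`Gal(K̄/K)` (a cyclic 4-isogeny defined over `K`) if and only if all points of `E'[2]` are
`K`-rational, i.e. `K(E'[2]) = K` (every 2-torsion point of `E'(K̄)` is Galois-fixed). -/
theorem stmt2 (K : Type*) [Field K] [CharZero K] (A B : K)
    (E E' : WeierstrassCurve K)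
    (hE : E = ⟨0, A, 0, B, 0⟩) (hE' : E' = ⟨0, -2 * A, 0, A ^ 2 - 4 * B, 0⟩)
    (hell : E.Δ ≠ 0)
    -- `E(K)[2] ≅ ℤ/2ℤ`:
    (htors : Nat.card {P : E.toAffine.Point // 2 • P = 0} = 2) :
    (∃ P : (E.toAffine⁄(AlgebraicClosure K)).Point, addOrderOf P = 4 ∧
        ∀ σ : AlgebraicClosure K ≃ₐ[K] AlgebraicClosure K,
          Point.map (W' := E.toAffine) σ.toAlgHom P ∈ AddSubgroup.zmultiples P) ↔
      (∀ Q : (E'.toAffine⁄(AlgebraicClosure K)).Point, 2 • Q = 0 →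
        ∀ σ : AlgebraicClosure K ≃ₐ[K] AlgebraicClosure K, Point.map (W' := E'.toAffine) σ.toAlgHom Q = Q) := by
  set L := AlgebraicClosure K with hL
  set f : K →+* L := algebraMap K L with hf
  have hfinj : Function.Injective f := f.injective
  haveI : CharZero L := charZero_of_injective_algebraMap hfinj
  -- discriminant facts
  have hΔE : E.Δ = 16 * B ^ 2 * (A ^ 2 - 4 * B) := by
    rw [hE, WeierstrassCurve.Δ]; dsimp only [b₂, b₄, b₆, b₈]; ring
  have hB : B ≠ 0 := by
    intro h; apply hell; rw [hΔE, h]; ring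
  have hD : A ^ 2 - 4 * B ≠ 0 := by
    intro h; apply hell; rw [hΔE, h]; ring
  have hΔE' : E'.Δ = 256 * B * (A ^ 2 - 4 * B) ^ 2 := by
    rw [hE', WeierstrassCurve.Δ]; dsimp only [b₂, b₄, b₆, b₈]; ring
  have hellE' : E'.Δ ≠ 0 := by
    rw [hΔE']
    exact mul_ne_zero (mul_ne_zero (by norm_num) hB) (pow_ne_zero _ hD)
  -- base-changed curves
  set W : Affine L := (E.baseChange L).toAffine with hW
  set W' : Affine L := (E'.baseChange L).toAffine with hW'
  have ha1 : W.a₁ = 0 := by rw [hW, hE]; simp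
  have ha3 : W.a₃ = 0 := by rw [hW, hE]; simp
  have ha6 : W.a₆ = 0 := by rw [hW, hE]; simp
  have ha2 : W.a₂ = f A := by rw [hW, hE]; rfl
  have ha4 : W.a₄ = f B := by rw [hW, hE]; rfl
  have ha1' : W'.a₁ = 0 := by rw [hW', hE']; simp
  have ha3' : W'.a₃ = 0 := by rw [hW', hE']; simp
  have ha6' : W'.a₆ = 0 := by rw [hW', hE']; simp
  have ha2' : W'.a₂ = -2 * f A := by rw [hW', hE']; show f (-2 * A) = _; rw [map_mul, map_neg, map_ofNat]
  have ha4' : W'.a₄ = f A ^ 2 - 4 * f B := by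
    rw [hW', hE']; show f (A ^ 2 - 4 * B) = _; rw [map_sub, map_pow, map_mul, map_ofNat]
  have hWΔ : W.Δ ≠ 0 := by
    rw [hW]
    show (E.map f).Δ ≠ 0
    rw [map_Δ]
    exact fun hc => hell (hfinj (by rw [hc, map_zero]))
  have hW'Δ : W'.Δ ≠ 0 := by
    rw [hW']
    show (E'.map f).Δ ≠ 0
    rw [map_Δ]
    exact fun hc => hellE' (hfinj (by rw [hc, map_zero]))
  -- the point (0,0) on W
  have h00 : W.Nonsingular 0 0 :=
    (W.equation_iff_nonsingular_of_Δ_ne_zero hWΔ).mp ((my_equation_iff ha1 ha3 ha6 0 0).mpr (by ring))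
  constructor
  · -- forward direction
    rintro ⟨Q, hQ4, hQstab⟩
    -- Q is affine
    obtain (_ | @⟨x, y, hns⟩) := Q
    · rw [← Point.zero_def, addOrderOf_zero] at hQ4; norm_num at hQ4
    set Q : (E.toAffine⁄L).Point := Point.some _ _ hns with hQdef
    have hfour : (4 : ℕ) • Q = 0 := by
      have := addOrderOf_nsmul_eq_zero Q
      rwa [hQ4] at this
    have h2Qne : (2 : ℕ) • Q ≠ 0 := by
      intro hc
      have := addOrderOf_dvd_of_nsmul_eq_zero hc
      rw [hQ4] at this
      omega
    have hyne : y ≠ 0 := by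
      intro hc
      exact h2Qne (by rw [two_nsmul]; exact (my_two_torsion ha1 ha3 hns).mpr hc)
    -- double of Q
    set l := W.slope x x y y with hldef
    have h2Q : (2 : ℕ) • Q = Point.some _ _ (nonsingular_add hns hns fun hxy => my_Y_ne ha1 ha3 hyne hxy.right) := by
      rw [two_nsmul, hQdef, Point.add_self_of_Y_ne (my_Y_ne ha1 ha3 hyne)]
    have hy2 : W.addY x x y l = 0 := by
      have h4 : (2 : ℕ) • ((2 : ℕ) • Q) = 0 := by
        rw [← mul_nsmul]; norm_num; exact hfour
      rw [h2Q, two_nsmul] at h4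
      exact (my_two_torsion ha1 ha3 _).mp h4
    -- Galois action on Q
    have hstab : ∀ σ : L ≃ₐ[K] L, Point.map (W' := E.toAffine) σ.toAlgHom Q = Q ∨
        Point.map (W' := E.toAffine) σ.toAlgHom Q = -Q := by
      intro σ
      obtain ⟨n, hn⟩ := AddSubgroup.mem_zmultiples_iff.mp (hQstab σ)
      have horder : addOrderOf (Point.map (W' := E.toAffine) σ.toAlgHom Q) = 4 :=
        (addOrderOf_injective (Point.map (W' := E.toAffine) σ.toAlgHom) (Point.map_injective _) Q).trans hQ4
      have hfourz : (4 : ℤ) • Q = 0 := by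
        rw [show ((4 : ℤ) • Q) = (4 : ℕ) • Q from natCast_zsmul Q 4]; exact hfour
      have hmod : (n % 4) • Q = Point.map (W' := E.toAffine) σ.toAlgHom Q := by
        rw [← hn]
        conv_rhs => rw [show n = 4 * (n / 4) + n % 4 from (Int.mul_ediv_add_emod n 4).symm]
        rw [add_zsmul, mul_comm, mul_zsmul, hfourz, smul_zero, zero_add]
      have h0 : 0 ≤ n % 4 := Int.emod_nonneg n (by norm_num)
      have h4' : n % 4 < 4 := Int.emod_lt_of_pos n (by norm_num)
      set m := n % 4 with hm
      interval_cases m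
      · rw [zero_zsmul] at hmod
        rw [← hmod, addOrderOf_zero] at horder
        norm_num at horder
      · left; rw [← hmod, one_zsmul]
      · exfalso
        have : addOrderOf (Point.map (W' := E.toAffine) σ.toAlgHom Q) ∣ 2 := by
          apply addOrderOf_dvd_of_nsmul_eq_zero
          rw [← hmod]
          rw [show ((2 : ℕ) • ((2 : ℤ) • Q)) = (4 : ℕ) • Q by
            rw [← natCast_zsmul ((2 : ℤ) • Q) 2, smul_smul, ← natCast_zsmul Q 4]; norm_num]
          exact hfour
        rw [horder] at this
        omega
      · right
        rw [← hmod]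
        apply eq_neg_of_add_eq_zero_left
        calc (3 : ℤ) • Q + Q = (4 : ℤ) • Q := by
              nth_rewrite 2 [← one_zsmul Q]
              rw [← add_zsmul]; norm_num
        _ = 0 := hfourz
    -- x is Galois-fixed
    have hxfix : ∀ σ : L ≃ₐ[K] L, σ x = x := by
      intro σ
      rcases hstab σ with h | h
      · rw [hQdef, Point.map_some] at h
        exact (some_inj h).1
      · rw [hQdef, Point.neg_some, Point.map_some] at h
        exact (some_inj h).1
    -- x₂ := x-coordinate of 2Q is Galois-fixed
    have hx2fix : ∀ σ : L ≃ₐ[K] L, σ (W.addX x x l) = W.addX x x l := by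
      intro σ
      have hmap2 : Point.map (W' := E.toAffine) σ.toAlgHom ((2 : ℕ) • Q) = (2 : ℕ) • Q := by
        rw [map_nsmul]
        rcases hstab σ with h | h
        · rw [h]
        · rw [h, smul_neg, h2Q, Point.neg_some]
          exact some_congr _ _ rfl (by rw [my_negY ha1 ha3, hy2, neg_zero])
      rw [h2Q, Point.map_some] at hmap2
      exact (some_inj hmap2).1
    -- descend the x-coordinate of 2Q to K
    obtain ⟨u₀, hu₀⟩ := fixed_mem (W.addX x x l) hx2fix
    have heq2 : (W.addY x x y l) ^ 2 = (W.addX x x l) ^ 3 + W.a₂ * (W.addX x x l) ^ 2 +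
        W.a₄ * (W.addX x x l) :=
      (my_equation_iff ha1 ha3 ha6 _ _).mp
        (nonsingular_add hns hns fun hxy => my_Y_ne ha1 ha3 hyne hxy.right).left
    rw [hy2] at heq2
    have hu₀eq : u₀ ^ 3 + A * u₀ ^ 2 + B * u₀ = 0 := by
      apply hfinj
      rw [map_zero, map_add, map_add, map_mul, map_mul, map_pow, map_pow, hu₀, ← ha2, ← ha4]
      linear_combination -heq2
    -- the K-coefficients of E
    have hKa1 : E.toAffine.a₁ = 0 := by rw [hE]
    have hKa3 : E.toAffine.a₃ = 0 := by rw [hE]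
    have hKa6 : E.toAffine.a₆ = 0 := by rw [hE]
    have hKa2 : E.toAffine.a₂ = A := by rw [hE]
    have hKa4 : E.toAffine.a₄ = B := by rw [hE]
    have hu0 : u₀ = 0 := by
      by_contra hu0
      -- three distinct 2-torsion points over K, contradicting htors
      have hK00 : E.toAffine.Nonsingular 0 0 :=
        (E.toAffine.equation_iff_nonsingular_of_Δ_ne_zero hell).mp
          ((my_equation_iff hKa1 hKa3 hKa6 0 0).mpr (by ring))
      have hKu : E.toAffine.Nonsingular u₀ 0 :=
        (E.toAffine.equation_iff_nonsingular_of_Δ_ne_zero hell).mp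
          ((my_equation_iff hKa1 hKa3 hKa6 u₀ 0).mpr
            (by rw [hKa2, hKa4]; linear_combination -hu₀eq))
      have m1 : (2 : ℕ) • (0 : E.toAffine.Point) = 0 := smul_zero _
      have m2 : (2 : ℕ) • (Point.some _ _ hK00) = 0 := by
        rw [two_nsmul]; exact (my_two_torsion hKa1 hKa3 hK00).mpr rfl
      have m3 : (2 : ℕ) • (Point.some _ _ hKu) = 0 := by
        rw [two_nsmul]; exact (my_two_torsion hKa1 hKa3 hKu).mpr rfl
      have d1 : (0 : E.toAffine.Point) ≠ Point.some _ _ hK00 := fun hc =>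
        Point.some_ne_zero hK00 hc.symm
      have d2 : (0 : E.toAffine.Point) ≠ Point.some _ _ hKu := fun hc =>
        Point.some_ne_zero hKu hc.symm
      have d3 : Point.some _ _ hK00 ≠ Point.some _ _ hKu := fun hc => hu0 ((some_inj hc).1).symm
      set g : Fin 3 → {P : E.toAffine.Point // 2 • P = 0} :=
        ![⟨0, m1⟩, ⟨Point.some _ _ hK00, m2⟩, ⟨Point.some _ _ hKu, m3⟩] with hg
      have hginj : Function.Injective g := by
        intro i j hij
        have hval : (g i).1 = (g j).1 := congrArg Subtype.val hij
        fin_cases i <;> fin_cases j <;>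
          simp only [hg, Fin.isValue, Matrix.cons_val_zero, Matrix.cons_val_one,
            Matrix.head_cons, Matrix.cons_val_two, Matrix.tail_cons] at hval ⊢ <;>
          first
            | rfl
            | exact absurd hval d1 | exact absurd hval.symm d1
            | exact absurd hval d2 | exact absurd hval.symm d2
            | exact absurd hval d3 | exact absurd hval.symm d3
      haveI : Finite {P : E.toAffine.Point // 2 • P = 0} :=
        Nat.finite_of_card_ne_zero (by rw [htors]; norm_num)
      have hle := Nat.card_le_card_of_injective g hginj
      rw [htors, Nat.card_eq_fintype_card, Fintype.card_fin] at hle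
      omega
    -- hence the x-coordinate of 2Q is 0 and x² = B
    have haddX0 : W.addX x x l = 0 := by rw [← hu₀, hu0, map_zero]
    have hxsq : x ^ 2 = W.a₄ := my_x_sq ha1 ha3 ha6 hns hyne haddX0
    obtain ⟨c, hcx⟩ := fixed_mem x hxfix
    have hc2 : c ^ 2 = B := by
      apply hfinj
      rw [map_pow, hcx, hxsq, ha4]
    -- now prove every 2-torsion point of E' is Galois-fixed
    intro Q' hQ'2 σ
    obtain (_ | @⟨X, Y, hq⟩) := Q'
    · rfl
    have hY : Y = 0 := (my_two_torsion ha1' ha3' hq).mp (by rw [← two_nsmul]; exact hQ'2)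
    have heqX : (0 : L) = X ^ 3 + (-2 * f A) * X ^ 2 + (f A ^ 2 - 4 * f B) * X := by
      have hh := (my_equation_iff ha1' ha3' ha6' X Y).mp hq.left
      rw [hY, ha2', ha4'] at hh
      linear_combination hh
    have hfc2 : (f c) ^ 2 = f B := by rw [← map_pow, hc2]
    have hfact : X * ((X - (f A + 2 * f c)) * (X - (f A - 2 * f c))) = 0 := by
      linear_combination -heqX - 4 * X * hfc2
    have hXfix : σ X = X := by
      rcases mul_eq_zero.mp hfact with h1 | h1
      · rw [h1]; exact map_zero σ
      rcases mul_eq_zero.mp h1 with h2 | h2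
      · have hX : X = f (A + 2 * c) := by
          rw [map_add, map_mul, map_ofNat]; linear_combination h2
        rw [hX]; exact σ.commutes _
      · have hX : X = f (A - 2 * c) := by
          rw [map_sub, map_mul, map_ofNat]; linear_combination h2
        rw [hX]; exact σ.commutes _
    rw [Point.map_some]
    exact some_congr _ _ hXfix (by rw [hY]; exact map_zero σ.toAlgHom)
  · -- reverse direction
    intro hrat
    obtain ⟨s, hs⟩ := IsAlgClosed.exists_pow_nat_eq (f B) (n := 2) two_pos
    have heqs : W'.Equation (f A + 2 * s) 0 :=
      (my_equation_iff ha1' ha3' ha6' _ _).mpr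
        (by rw [ha2', ha4']; linear_combination (-4 * (f A + 2 * s)) * hs)
    have hnss : W'.Nonsingular (f A + 2 * s) 0 := (W'.equation_iff_nonsingular_of_Δ_ne_zero hW'Δ).mp heqs
    have h2t : (2 : ℕ) • (Point.some _ _ hnss : (E'.toAffine⁄L).Point) = 0 := by
      rw [two_nsmul]; exact (my_two_torsion ha1' ha3' hnss).mpr rfl
    have hfixs' : ∀ σ : L ≃ₐ[K] L, σ s = s := by
      intro σ
      have hmape := hrat (Point.some _ _ hnss) h2t σ
      rw [Point.map_some] at hmape
      have h1 : σ.toAlgHom (f A + 2 * s) = f A + 2 * s := (some_inj hmape).1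
      have h2 : (2 : L) * σ s = 2 * s := by
        have h1' : σ (f A + 2 * s) = f A + 2 * s := h1
        rw [map_add, map_mul, map_ofNat, show σ (f A) = f A from σ.commutes A] at h1'
        linear_combination h1'
      exact mul_left_cancel₀ two_ne_zero h2
    obtain ⟨β, hβ⟩ := fixed_mem s hfixs'
    have hβ2 : β ^ 2 = B := hfinj (by rw [map_pow, hβ, hs])
    obtain ⟨b', hb'2, hAb⟩ : ∃ b', b' ^ 2 = B ∧ A + 2 * b' ≠ 0 := by
      by_cases hA : A + 2 * β = 0
      · refine ⟨-β, by rw [neg_pow]; simp [hβ2], fun hc => ?_⟩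
        have hβ0 : β = 0 := by linear_combination (1/4 : K) * hA - (1/4 : K) * hc
        exact hB (by rw [← hβ2, hβ0]; ring)
      · exact ⟨β, hβ2, hA⟩
    have hb'0 : b' ≠ 0 := fun hc => hB (by rw [← hb'2, hc]; ring)
    obtain ⟨t, ht⟩ := IsAlgClosed.exists_pow_nat_eq (f (A + 2 * b')) (n := 2) two_pos
    have htne : t ≠ 0 := by
      intro hc
      rw [hc] at ht
      exact hAb (hfinj (by rw [← ht, map_zero]; ring))
    have hu : (f b') ^ 2 = f B := by rw [← map_pow, hb'2]
    have ht' : t ^ 2 = f A + 2 * f b' := by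
      rw [ht, map_add, map_mul, map_ofNat]
    have heqQ : W.Equation (f b') (f b' * t) :=
      (my_equation_iff ha1 ha3 ha6 _ _).mpr (by
        rw [ha2, ha4]
        linear_combination (f b') ^ 2 * ht' + (f b') * hu)
    have hnsQ : W.Nonsingular (f b') (f b' * t) := (W.equation_iff_nonsingular_of_Δ_ne_zero hWΔ).mp heqQ
    have hfb0 : f b' ≠ 0 := fun hc => hb'0 (hfinj (by rw [hc, map_zero]))
    have hyQ : f b' * t ≠ 0 := mul_ne_zero hfb0 htne
    have hx2 : (f b') ^ 2 = W.a₄ := by rw [ha4]; exact hu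
    have hdbl : (Point.some _ _ hnsQ : (E.toAffine⁄L).Point) + Point.some _ _ hnsQ = Point.some _ _ h00 :=
      my_double ha1 ha3 ha6 hnsQ hyQ hx2 h00
    have h2Q0 : (2 : ℕ) • (Point.some _ _ hnsQ : (E.toAffine⁄L).Point) = Point.some _ _ h00 := by
      rw [two_nsmul]; exact hdbl
    refine ⟨Point.some _ _ hnsQ, ?_, ?_⟩
    · have h4Q : (2 : ℕ) ^ (1 + 1) • (Point.some _ _ hnsQ : (E.toAffine⁄L).Point) = 0 := by
        rw [show (2 : ℕ) ^ (1 + 1) = 2 * 2 by norm_num, mul_nsmul, h2Q0, two_nsmul]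
        exact (my_two_torsion ha1 ha3 h00).mpr rfl
      have h2Qne' : ¬ (2 : ℕ) ^ 1 • (Point.some _ _ hnsQ : (E.toAffine⁄L).Point) = 0 := by
        rw [pow_one, h2Q0]
        exact Point.some_ne_zero h00
      have hord := addOrderOf_eq_prime_pow h2Qne' h4Q
      rw [hord]; norm_num
    · intro σ
      have hσx : σ.toAlgHom (f b') = f b' := σ.toAlgHom.commutes b'
      have hσt2 : (σ t) ^ 2 = t ^ 2 := by
        rw [← map_pow, ht]
        exact σ.commutes _
      have hprod : (σ t - t) * (σ t + t) = 0 := by linear_combination hσt2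
      rcases mul_eq_zero.mp hprod with h1 | h1
      · have hσt : σ t = t := by linear_combination h1
        have hσy : σ.toAlgHom (f b' * t) = f b' * t := by
          rw [map_mul, hσx]; show f b' * σ t = f b' * t; rw [hσt]
        have heqpt : Point.map (W' := E.toAffine) σ.toAlgHom (Point.some _ _ hnsQ) = (Point.some _ _ hnsQ : (E.toAffine⁄L).Point) := by
          rw [Point.map_some]; exact some_congr _ _ hσx hσy
        rw [heqpt]
        exact AddSubgroup.mem_zmultiples _
      · have hσt : σ t = -t := by linear_combination h1
        have hσy : σ.toAlgHom (f b' * t) = -(f b' * t) := by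
          rw [map_mul, hσx]; show f b' * σ t = _; rw [hσt]; ring
        have heqpt : Point.map (W' := E.toAffine) σ.toAlgHom (Point.some _ _ hnsQ) = -(Point.some _ _ hnsQ : (E.toAffine⁄L).Point) := by
          rw [Point.map_some, Point.neg_some]
          exact some_congr _ _ hσx (by rw [my_negY ha1 ha3]; exact hσy)
        rw [heqpt]
        exact neg_mem (AddSubgroup.mem_zmultiples _)
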